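/- Let C ⊆ ℝⁿ be a convex set and let x₁,…,xₚ be exposed points of C (for each i there is a linear functional ℓ with ℓ(xᵢ) > ℓ(z) for all z ∈ C with z ≠ xᵢ). For a set S ⊆ ℝⁿ and x ∈ S, let T(x; S) = {w ∈ ℝⁿ : x + λw ∈ S for some λ > 0} denote the cone of feasible directions. Then: (1) for every i ∈ [p], C ∩ (xᵢ − T(xᵢ; conv({x₁,…,xₚ}))) = {xᵢ}; and (2) for every y ∈ C with y ∉ conv({x₁,…,xₚ}), the matrix X with columns x₁,…,xₚ and the point y satisfy the vertex non-cover condition. -/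

import Mathlib

noncomputable section

/-- `X` (with columns `x i`) and the point `v` satisfy the vertex non-cover condition. -/
def VertexNonCover {E : Type*} [AddCommGroup E] [Module ℝ E] {p : ℕ}
    (x : Fin p → E) (v : E) : Prop :=
  (∀ i, v ≠ x i) ∧
    Set.extremePoints ℝ (convexHull ℝ (Set.range x ∪ {v})) = Set.range x ∪ {v}

/-- The cone of feasible directions to `S` at `x`. -/
def fdCone {E : Type*} [AddCommGroup E] [Module ℝ E] (S : Set E) (x : E) : Set E :=
  {w | ∃ lam : ℝ, 0 < lam ∧ x + lam • w ∈ S}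

/-- A strictly exposed point is extreme. -/
lemma exposed_mem_extremePoints {E : Type*} [AddCommGroup E] [Module ℝ E]
    {K : Set E} {v : E} (hv : v ∈ K) (ℓ : E →ₗ[ℝ] ℝ)
    (h : ∀ u ∈ K, u ≠ v → ℓ u < ℓ v) : v ∈ K.extremePoints ℝ := by
  have key : ∀ a ∈ K, ∀ b ∈ K, v ∈ openSegment ℝ a b → a = v := by
    rintro a ha b hb ⟨s, t, hs, ht, hst, heq⟩
    by_contra hav
    have h1 : ℓ a < ℓ v := h a ha hav
    have h2 : ℓ b ≤ ℓ v := by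
      rcases eq_or_ne b v with rfl | hbv
      · exact le_rfl
      · exact (h b hb hbv).le
    have : ℓ v = s * ℓ a + t * ℓ b := by
      rw [← heq]; simp [map_add, map_smul, smul_eq_mul]
    have h3 : s * ℓ v + t * ℓ v = ℓ v := by rw [← add_mul, hst, one_mul]
    nlinarith [mul_lt_mul_of_pos_left h1 hs, mul_le_mul_of_nonneg_left h2 ht.le]
  refine ⟨hv, fun a ha b hb hab => ?_⟩
  exact key a ha b hb hab

theorem stmt7 {n p : ℕ}
    (C : Set (EuclideanSpace ℝ (Fin n))) (hC : Convex ℝ C)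
    (x : Fin p → EuclideanSpace ℝ (Fin n)) (hxC : ∀ i, x i ∈ C)
    (hexp : ∀ i, ∃ ℓ : EuclideanSpace ℝ (Fin n) →L[ℝ] ℝ,
      ∀ z ∈ C, z ≠ x i → ℓ z < ℓ (x i)) :
    (∀ i, C ∩ ((fun w => x i - w) '' fdCone (convexHull ℝ (Set.range x)) (x i)) = {x i}) ∧
      (∀ y ∈ C, y ∉ convexHull ℝ (Set.range x) → VertexNonCover x y) := by
  have hsubC : convexHull ℝ (Set.range x) ⊆ C :=
    convexHull_min (Set.range_subset_iff.2 hxC) hC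
  constructor
  · intro i
    obtain ⟨ℓ, hℓ⟩ := hexp i
    have hle : ∀ u ∈ convexHull ℝ (Set.range x), ℓ u ≤ ℓ (x i) := by
      intro u hu
      refine convexHull_min ?_ (convex_halfSpace_le (ℓ : _ →ₗ[ℝ] ℝ).isLinear (ℓ (x i))) hu
      rintro _ ⟨j, rfl⟩
      rcases eq_or_ne (x j) (x i) with h | h
      · simp only [Set.mem_setOf_eq, h]; exact le_rfl
      · exact (hℓ _ (hxC j) h).le
    ext z
    simp only [Set.mem_inter_iff, Set.mem_image, Set.mem_singleton_iff]
    constructor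
    · rintro ⟨hzC, w, ⟨lam, hlam, hmem⟩, rfl⟩
      by_contra hne
      have h1 : ℓ (x i) + lam * ℓ w ≤ ℓ (x i) := by
        have := hle _ hmem
        simpa [map_add, map_smul, smul_eq_mul] using this
      have h2 : ℓ (x i - w) < ℓ (x i) := hℓ _ hzC hne
      rw [map_sub] at h2
      nlinarith
    · rintro rfl
      refine ⟨hxC i, 0, ⟨1, one_pos, ?_⟩, by simp⟩
      simpa using subset_convexHull ℝ (Set.range x) (Set.mem_range_self i)
  · intro y hyC hy
    have hKsubC : convexHull ℝ (Set.range x ∪ {y}) ⊆ C := by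
      refine convexHull_min ?_ hC
      rintro u (⟨j, rfl⟩ | rfl)
      · exact hxC j
      · exact hyC
    refine ⟨fun i h => hy (h ▸ subset_convexHull ℝ _ (Set.mem_range_self i)), ?_⟩
    apply Set.Subset.antisymm (extremePoints_convexHull_subset)
    intro u hu
    rcases hu with ⟨i, rfl⟩ | huy
    · obtain ⟨ℓ, hℓ⟩ := hexp i
      exact exposed_mem_extremePoints
        (subset_convexHull ℝ _ (Or.inl (Set.mem_range_self i))) (ℓ : _ →ₗ[ℝ] ℝ)
        (fun w hw hne => hℓ w (hKsubC hw) hne)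
    · rw [Set.mem_singleton_iff] at huy
      rw [huy]
      have hymem : y ∈ convexHull ℝ (Set.range x ∪ {y}) :=
        subset_convexHull ℝ _ (Or.inr rfl)
      rcases (Set.range x).eq_empty_or_nonempty with hre | hrne
      · refine exposed_mem_extremePoints hymem 0 (fun w hw hne => absurd ?_ hne)
        rw [hre, Set.empty_union, convexHull_singleton] at hw
        exact hw
      · obtain ⟨ℓ, u, hlt, hu⟩ := geometric_hahn_banach_closed_point
          (convex_convexHull ℝ (Set.range x))
          (((Set.finite_range x).isCompact_convexHull (𝕜 := ℝ)).isClosed) hy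
        refine exposed_mem_extremePoints hymem (ℓ : _ →ₗ[ℝ] ℝ) (fun w hw hne => ?_)
        rw [Set.union_comm, Set.singleton_union, convexHull_insert hrne,
          mem_convexJoin] at hw
        obtain ⟨a, ha, b, hb, s, t, hs, ht, hst, heq⟩ := hw
        rw [Set.mem_singleton_iff] at ha
        rw [ha] at heq
        rcases eq_or_lt_of_le ht with ht0 | ht0
        · exfalso
          apply hne
          rw [← heq, ← ht0]
          have : s = 1 := by linarith
          simp [this]
        · have hby : ℓ b < ℓ y := (hlt b hb).trans hu
          have hw' : ℓ w = s * ℓ y + t * ℓ b := by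
            rw [← heq]; simp [map_add, map_smul, smul_eq_mul]
          simp only [ContinuousLinearMap.coe_coe]
          rw [hw']
          have h3 : s * ℓ y + t * ℓ y = ℓ y := by rw [← add_mul, hst, one_mul]
          nlinarith [mul_lt_mul_of_pos_left hby ht0]
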